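/- Let R, K_ℓ, K_R be smooth with R > 0 on an interval [a,b], and set H = 2R'/R, θ⁺ = 2K_R + H, trK = K_ℓ + 2K_R. Suppose θ⁺(ℓ) > 0 for all ℓ ∈ [a,b]. If k is a C¹ solution of ∂_ℓ k = −K_ℓ k² − H k + trK on [a,b] with k(a) > −1, then k(ℓ) > −1 for all ℓ ∈ [a,b]. -/

import Mathlib

open Filter Asymptotics Set Topology

/-- Mean curvature `H = 2 R' / R` of the spherically symmetric spheres. -/
noncomputable def Hf (R : ℝ → ℝ) : ℝ → ℝ := fun ℓ => 2 * deriv R ℓ / R ℓ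

/-- `trK = K_ℓ + 2 K_R`. -/
def trKf (Kl KR : ℝ → ℝ) : ℝ → ℝ := fun ℓ => Kl ℓ + 2 * KR ℓ

/-- Outer expansion `θ⁺ = 2 K_R + H`. -/
noncomputable def thetaPlus (R KR : ℝ → ℝ) : ℝ → ℝ := fun ℓ => 2 * KR ℓ + Hf R ℓ

/-- Inner expansion `θ⁻ = 2 K_R − H`. -/
noncomputable def thetaMinus (R KR : ℝ → ℝ) : ℝ → ℝ := fun ℓ => 2 * KR ℓ - Hf R ℓ

/-- If `θ⁺ > 0` on `[a,b]`, then a `C¹` solution of the reduced Jang equation on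
`[a,b]` with `k(a) > −1` satisfies `k > −1` on all of `[a,b]`. -/
theorem jang_lower_barrier_theta_plus_pos (a b : ℝ) (hab : a ≤ b) (R Kl KR k : ℝ → ℝ)
    (hR : ContDiffOn ℝ (⊤ : ℕ∞) R (Set.Icc a b))
    (hKl : ContDiffOn ℝ (⊤ : ℕ∞) Kl (Set.Icc a b))
    (hKR : ContDiffOn ℝ (⊤ : ℕ∞) KR (Set.Icc a b))
    (hRpos : ∀ ℓ ∈ Set.Icc a b, 0 < R ℓ)
    (hθ : ∀ ℓ ∈ Set.Icc a b, 0 < thetaPlus R KR ℓ)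
    (hode : ∀ ℓ ∈ Set.Icc a b,
      HasDerivAt k (-(Kl ℓ) * k ℓ ^ 2 - Hf R ℓ * k ℓ + trKf Kl KR ℓ) ℓ)
    (hka : -1 < k a) :
    ∀ ℓ ∈ Set.Icc a b, -1 < k ℓ := by
  by_contra hcon
  push_neg at hcon
  set S : Set ℝ := Set.Icc a b ∩ k ⁻¹' Set.Iic (-1) with hSdef
  have hcont : ContinuousOn k (Set.Icc a b) := fun x hx =>
    ((hode x hx).continuousAt).continuousWithinAt
  have hSclosed : IsClosed S :=
    hcont.preimage_isClosed_of_isClosed isClosed_Icc isClosed_Iic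
  obtain ⟨x0, hx0, hkx0⟩ := hcon
  have hSne : S.Nonempty := ⟨x0, hx0, by simpa using hkx0⟩
  have hSbdd : BddBelow S := ⟨a, fun x hx => hx.1.1⟩
  set c := sInf S with hc
  have hcS : c ∈ S := hSclosed.csInf_mem hSne hSbdd
  have hcab : c ∈ Set.Icc a b := hcS.1
  have hkc_le : k c ≤ -1 := hcS.2
  have hac : a < c := hcab.1.lt_of_ne fun h => absurd hkc_le (not_le.2 (h ▸ hka))
  have hlt : ∀ x ∈ Set.Ico a c, -1 < k x := by
    intro x hx
    by_contra h
    push_neg at h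
    have hxS : x ∈ S := ⟨⟨hx.1, hx.2.le.trans hcab.2⟩, h⟩
    exact absurd (csInf_le hSbdd hxS) (not_le.2 hx.2)
  have hnb : (𝓝[<] c).NeBot := nhdsLT_neBot c
  have hmem : Set.Ioo a c ∈ 𝓝[<] c := Ioo_mem_nhdsLT_of_mem ⟨hac, le_refl c⟩
  have hkc_ge : -1 ≤ k c := by
    have ht : Tendsto k (𝓝[<] c) (𝓝 (k c)) :=
      ((hode c hcab).continuousAt).tendsto.mono_left nhdsWithin_le_nhds
    exact ge_of_tendsto ht (eventually_of_mem hmem fun x hx =>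
      (hlt x ⟨hx.1.le, hx.2⟩).le)
  have hkc : k c = -1 := le_antisymm hkc_le hkc_ge
  have hD : HasDerivAt k (thetaPlus R KR c) c := by
    have h := hode c hcab
    rw [hkc] at h
    convert h using 1
    simp only [thetaPlus, trKf]
    ring
  have hslope : Tendsto (slope k c) (𝓝[<] c) (𝓝 (thetaPlus R KR c)) :=
    (hasDerivAt_iff_tendsto_slope.mp hD).mono_left
      (nhdsWithin_mono c fun x hx => ne_of_lt hx)
  have hev : ∀ᶠ x in 𝓝[<] c, 0 < slope k c x :=
    hslope.eventually (eventually_gt_nhds (hθ c hcab))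
  obtain ⟨x, hxslope, hxIoo⟩ := (hev.and (eventually_of_mem hmem fun x hx => hx)).exists
  have hxc : x - c < 0 := sub_neg.2 hxIoo.2
  rw [slope_def_field, div_pos_iff] at hxslope
  rcases hxslope with ⟨_, h2⟩ | ⟨h1, _⟩
  · exact absurd hxc (not_lt.2 h2.le)
  · have : k x < -1 := by rw [← hkc]; linarith [sub_neg.1 h1]
    exact absurd this (not_lt.2 (hlt x ⟨hxIoo.1.le, hxIoo.2⟩).le)
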